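/- arXiv:1705.06999 — 2 statements merged into one kernel-verified Lean document; each statement's English description precedes it below -/
import Mathlib

section
/- Let u, v : Ω → ℝ be smooth. If u₂ = −v₁·v₂ and u₄ = v₃ − v₁·v₄ hold identically on Ω, then v satisfies the second-order equation v₂₃ + v₂·v₁₄ − v₄·v₁₂ = 0 on Ω. -/
noncomputable def pd (i : Fin 4) (F : (Fin 4 → ℝ) → ℝ) : (Fin 4 → ℝ) → ℝ :=
  fun x => fderiv ℝ F x (Pi.single i 1)

section helpers
variable {F G : (Fin 4 → ℝ) → ℝ} {x : Fin 4 → ℝ} {Ω : Set (Fin 4 → ℝ)}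

lemma pd_contDiffAt (i : Fin 4) (hF : ContDiffAt ℝ (⊤ : ℕ∞) F x) :
    ContDiffAt ℝ (⊤ : ℕ∞) (pd i F) x := by
  have h1 : ContDiffAt ℝ (⊤ : ℕ∞) (fderiv ℝ F) x :=
    hF.fderiv_right (le_of_eq (by simp))
  exact (ContinuousLinearMap.apply ℝ ℝ ((Pi.single i 1 : Fin 4 → ℝ))).contDiff.contDiffAt.comp x h1

lemma pd_congr (hΩ : IsOpen Ω) (h : ∀ y ∈ Ω, F y = G y) (hx : x ∈ Ω) (i : Fin 4) :
    pd i F x = pd i G x := by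
  have : F =ᶠ[nhds x] G := Filter.eventuallyEq_of_mem (hΩ.mem_nhds hx) h
  simp [pd, this.fderiv_eq]

lemma pd_fderiv (i j : Fin 4) (hF : ContDiffAt ℝ (⊤ : ℕ∞) F x) :
    pd i (pd j F) x = fderiv ℝ (fderiv ℝ F) x (Pi.single i 1) (Pi.single j 1) := by
  have hd : DifferentiableAt ℝ (fderiv ℝ F) x :=
    (hF.fderiv_right (m := (⊤ : ℕ∞)) (le_of_eq (by simp))).differentiableAt (by simp)
  have := fderiv_clm_apply hd (differentiableAt_const ((Pi.single j 1 : Fin 4 → ℝ)))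
  have hpd : pd j F = fun y => fderiv ℝ F y (Pi.single j 1) := rfl
  simp only [pd, hpd]
  rw [this]
  simp

lemma pd_symm (i j : Fin 4) (hF : ContDiffAt ℝ (⊤ : ℕ∞) F x) :
    pd i (pd j F) x = pd j (pd i F) x := by
  have hsymm : IsSymmSndFDerivAt ℝ F x :=
    hF.isSymmSndFDerivAt (by rw [minSmoothness_of_isRCLikeNormedField]; exact WithTop.coe_le_coe.2 le_top)
  rw [pd_fderiv i j hF, pd_fderiv j i hF, hsymm]

lemma pd_mul (i : Fin 4) {a b : (Fin 4 → ℝ) → ℝ} (ha : DifferentiableAt ℝ a x)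
    (hb : DifferentiableAt ℝ b x) :
    pd i (fun y => a y * b y) x = pd i a x * b x + a x * pd i b x := by
  simp [pd, fderiv_fun_mul ha hb]; ring

lemma pd_neg (i : Fin 4) {a : (Fin 4 → ℝ) → ℝ} :
    pd i (fun y => -a y) x = -pd i a x := by
  simp [pd, fderiv_neg]

lemma pd_sub (i : Fin 4) {a b : (Fin 4 → ℝ) → ℝ} (ha : DifferentiableAt ℝ a x)
    (hb : DifferentiableAt ℝ b x) :
    pd i (fun y => a y - b y) x = pd i a x - pd i b x := by
  simp [pd, fderiv_fun_sub ha hb]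

end helpers

/-- Elimination of `u` from the Segre type [31] system `u₂ = −v₁v₂`, `u₄ = v₃ − v₁v₄`
yields `v₂₃ + v₂v₁₄ − v₄v₁₂ = 0`.  Coordinates `x¹,…,x⁴` are indexed by `0,…,3`. -/
theorem statement5 (Ω : Set (Fin 4 → ℝ)) (hΩ : IsOpen Ω)
    (u v : (Fin 4 → ℝ) → ℝ)
    (hu : ContDiffOn ℝ (⊤ : ℕ∞) u Ω) (hv : ContDiffOn ℝ (⊤ : ℕ∞) v Ω)
    (heq1 : ∀ x ∈ Ω, pd 1 u x = -(pd 0 v x * pd 1 v x))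
    (heq2 : ∀ x ∈ Ω, pd 3 u x = pd 2 v x - pd 0 v x * pd 3 v x) :
    ∀ x ∈ Ω,
      pd 2 (pd 1 v) x + pd 1 v x * pd 3 (pd 0 v) x - pd 3 v x * pd 1 (pd 0 v) x = 0 := by
  intro x hx
  have hvx : ContDiffAt ℝ (⊤ : ℕ∞) v x := hv.contDiffAt (hΩ.mem_nhds hx)
  have hux : ContDiffAt ℝ (⊤ : ℕ∞) u x := hu.contDiffAt (hΩ.mem_nhds hx)
  have hdv : ∀ i : Fin 4, DifferentiableAt ℝ (pd i v) x := fun i =>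
    (pd_contDiffAt i hvx).differentiableAt (by simp)
  -- LHS: pd 3 (pd 1 u) x
  have e1 : pd 3 (pd 1 u) x = pd 3 (fun y => -(pd 0 v y * pd 1 v y)) x :=
    pd_congr hΩ heq1 hx 3
  have e2 : pd 1 (pd 3 u) x = pd 1 (fun y => pd 2 v y - pd 0 v y * pd 3 v y) x :=
    pd_congr hΩ heq2 hx 1
  have e3 : pd 3 (pd 1 u) x = pd 1 (pd 3 u) x := pd_symm 3 1 hux
  have e1' : pd 3 (fun y => -(pd 0 v y * pd 1 v y)) x
      = -(pd 3 (pd 0 v) x * pd 1 v x + pd 0 v x * pd 3 (pd 1 v) x) := by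
    have : pd 3 (fun y => -(pd 0 v y * pd 1 v y)) x
        = -pd 3 (fun y => pd 0 v y * pd 1 v y) x := pd_neg 3
    rw [this, pd_mul 3 (hdv 0) (hdv 1)]
  have e2' : pd 1 (fun y => pd 2 v y - pd 0 v y * pd 3 v y) x
      = pd 1 (pd 2 v) x - (pd 1 (pd 0 v) x * pd 3 v x + pd 0 v x * pd 1 (pd 3 v) x) := by
    rw [pd_sub 1 (b := fun y => pd 0 v y * pd 3 v y) (hdv 2) ((hdv 0).mul (hdv 3)), pd_mul 1 (hdv 0) (hdv 3)]
  have s13 : pd 1 (pd 3 v) x = pd 3 (pd 1 v) x := pd_symm 1 3 hvx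
  have s12 : pd 1 (pd 2 v) x = pd 2 (pd 1 v) x := pd_symm 1 2 hvx
  have key : -(pd 3 (pd 0 v) x * pd 1 v x + pd 0 v x * pd 3 (pd 1 v) x)
      = pd 2 (pd 1 v) x - (pd 1 (pd 0 v) x * pd 3 v x + pd 0 v x * pd 3 (pd 1 v) x) := by
    rw [← s12, ← s13, ← e2', ← e2, ← e3, e1, e1', s13]
  linarith [key]
end

section
/- Let m, n : Ω → ℝ be smooth. Then the quasilinear system m₄ − n₃ + m·n₂ − n·m₂ = 0, m₃ − n₂ + m·n₁ − n·m₁ = 0 holds identically on Ω if and only if for every λ ∈ ℝ the vector fields X = ∂₃ − (λ + m)·∂₂ + λ·m·∂₁ and Y = ∂₄ − (λ² + λ·m + n)·∂₂ + (λ²·m + λ·n)·∂₁ on Ω commute: [X, Y] = 0. -/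
/-- Lie bracket of two vector fields on ℝ⁴, given by their component functions:
`[X, Y]ⁱ = Σⱼ (Xʲ ∂ⱼYⁱ − Yʲ ∂ⱼXⁱ)`. -/
noncomputable def lieB (X Y : (Fin 4 → ℝ) → (Fin 4 → ℝ)) : (Fin 4 → ℝ) → (Fin 4 → ℝ) :=
  fun x i => ∑ j : Fin 4, (X x j * pd j (fun y => Y y i) x - Y x j * pd j (fun y => X y i) x)

lemma pd_const (x : Fin 4 → ℝ) (c : ℝ) (j : Fin 4) : pd j (fun _ => c) x = 0 := by
  simp [pd]

lemma pd_constMul {f : (Fin 4 → ℝ) → ℝ} {x : Fin 4 → ℝ} (c : ℝ)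
    (hf : DifferentiableAt ℝ f x) (j : Fin 4) :
    pd j (fun y => c * f y) x = c * pd j f x := by
  unfold pd
  rw [fderiv_const_mul hf c]
  simp

lemma pd_negConstAdd {f : (Fin 4 → ℝ) → ℝ} {x : Fin 4 → ℝ} (c : ℝ)
    (hf : DifferentiableAt ℝ f x) (j : Fin 4) :
    pd j (fun y => -(c + f y)) x = -pd j f x := by
  unfold pd
  rw [fderiv_fun_neg, fderiv_const_add]
  simp

lemma pd_mulAddMul {f g : (Fin 4 → ℝ) → ℝ} {x : Fin 4 → ℝ} (a b : ℝ)
    (hf : DifferentiableAt ℝ f x) (hg : DifferentiableAt ℝ g x) (j : Fin 4) :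
    pd j (fun y => a * f y + b * g y) x = a * pd j f x + b * pd j g x := by
  unfold pd
  rw [fderiv_fun_add (hf.const_mul a) (hg.const_mul b), fderiv_const_mul hf a, fderiv_const_mul hg b]
  simp

lemma pd_negAff {f g : (Fin 4 → ℝ) → ℝ} {x : Fin 4 → ℝ} (a b : ℝ)
    (hf : DifferentiableAt ℝ f x) (hg : DifferentiableAt ℝ g x) (j : Fin 4) :
    pd j (fun y => -(a + b * f y + g y)) x = -(b * pd j f x + pd j g x) := by
  unfold pd
  rw [fderiv_fun_neg, fderiv_fun_add (f := fun y => a + b * f y)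
      ((differentiableAt_const a).add (hf.const_mul b)) hg,
    fderiv_const_add, fderiv_const_mul hf b]
  simp

lemma lieB_eval (m n : (Fin 4 → ℝ) → ℝ) (x : Fin 4 → ℝ)
    (hm : DifferentiableAt ℝ m x) (hn : DifferentiableAt ℝ n x) (lam : ℝ) :
    lieB (fun y => ![lam * m y, -(lam + m y), 1, 0])
         (fun y => ![lam ^ 2 * m y + lam * n y, -(lam ^ 2 + lam * m y + n y), 0, 1]) x
    = ![lam ^ 2 * (pd 2 m x - pd 1 n x + m x * pd 0 n x - n x * pd 0 m x)
          - lam * (pd 3 m x - pd 2 n x + m x * pd 1 n x - n x * pd 1 m x),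
        (pd 3 m x - pd 2 n x + m x * pd 1 n x - n x * pd 1 m x)
          - lam * (pd 2 m x - pd 1 n x + m x * pd 0 n x - n x * pd 0 m x),
        0, 0] := by
  funext i
  fin_cases i <;>
    simp only [lieB, Fin.sum_univ_four,
      show ((⟨0, by norm_num⟩ : Fin 4)) = 0 from rfl,
      show ((⟨1, by norm_num⟩ : Fin 4)) = 1 from rfl,
      show ((⟨2, by norm_num⟩ : Fin 4)) = 2 from rfl,
      show ((⟨3, by norm_num⟩ : Fin 4)) = 3 from rfl,
      Matrix.cons_val_zero, Matrix.cons_val_one,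
      Matrix.head_cons, Matrix.cons_val_two, Matrix.tail_cons, Matrix.cons_val_three,
      Fin.isValue, pd_const, pd_constMul lam hm, pd_negConstAdd lam hm,
      pd_mulAddMul (lam ^ 2) lam hm hn, pd_negAff (lam ^ 2) lam hm hn] <;>
    ring

/-- The quasilinear system `m₄ − n₃ + mn₂ − nm₂ = 0`, `m₃ − n₂ + mn₁ − nm₁ = 0` holds on `Ω`
iff for every `λ` the vector fields `X = ∂₃ − (λ + m)∂₂ + λm∂₁` and
`Y = ∂₄ − (λ² + λm + n)∂₂ + (λ²m + λn)∂₁` commute on `Ω`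
(common Lax pair of the two canonical systems with a 5×4 Kronecker block).
Coordinates `x¹,…,x⁴` are indexed by `0,…,3`. -/
theorem statement13 (Ω : Set (Fin 4 → ℝ)) (hΩ : IsOpen Ω)
    (m n : (Fin 4 → ℝ) → ℝ)
    (hm : ContDiffOn ℝ (⊤ : ℕ∞) m Ω) (hn : ContDiffOn ℝ (⊤ : ℕ∞) n Ω) :
    (∀ x ∈ Ω,
        pd 3 m x - pd 2 n x + m x * pd 1 n x - n x * pd 1 m x = 0 ∧
        pd 2 m x - pd 1 n x + m x * pd 0 n x - n x * pd 0 m x = 0) ↔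
    (∀ lam : ℝ, ∀ x ∈ Ω,
        lieB (fun y => ![lam * m y, -(lam + m y), 1, 0])
             (fun y => ![lam ^ 2 * m y + lam * n y, -(lam ^ 2 + lam * m y + n y), 0, 1])
          x = 0) := by
  constructor
  · intro h lam x hx
    obtain ⟨h1, h2⟩ := h x hx
    have hmx : DifferentiableAt ℝ m x :=
      ((hm.contDiffAt (hΩ.mem_nhds hx)).differentiableAt (by simp))
    have hnx : DifferentiableAt ℝ n x :=
      ((hn.contDiffAt (hΩ.mem_nhds hx)).differentiableAt (by simp))
    rw [lieB_eval m n x hmx hnx lam, h1, h2]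
    funext i; fin_cases i <;> simp
  · intro h x hx
    have hmx : DifferentiableAt ℝ m x :=
      ((hm.contDiffAt (hΩ.mem_nhds hx)).differentiableAt (by simp))
    have hnx : DifferentiableAt ℝ n x :=
      ((hn.contDiffAt (hΩ.mem_nhds hx)).differentiableAt (by simp))
    have h0 := h 0 x hx
    have h1 := h 1 x hx
    rw [lieB_eval m n x hmx hnx 0] at h0
    rw [lieB_eval m n x hmx hnx 1] at h1
    have e0 := congrFun h0 1
    have e1 := congrFun h1 1
    simp at e0 e1
    constructor <;> linarith
end
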